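/- Let d ≥ 5 be odd and let α ∈ ℂ^d. If ⟨α, X Z^i α⟩ = 0 for every i = 1, 2, …, d−1 and ⟨α, X² α⟩ = 0, then also ⟨α, X α⟩ = 0. (In other words: if the vector (α_j^* α_{j+1 mod d})_{j=0}^{d−1} is proportional to the all-ones vector, say equal to λ(1,…,1), and ⟨α, X² α⟩ = 0, then λ = 0.) -/

import Mathlib

open Complex
open Finset

/-- `ω d = exp(2πi/d)`, the primitive `d`-th root of unity in `ℂ`. -/
noncomputable def ω (d : ℕ) : ℂ := Complex.exp (2 * Real.pi * Complex.I / d)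

noncomputable def pU (d : ℕ) [NeZero d] (m n : ZMod d) (α : ZMod d → ℂ) : ZMod d → ℂ :=
  fun k => ω d ^ (n.val * (k - m).val) * α (k - m)

noncomputable def ip (d : ℕ) [NeZero d] (α β : ZMod d → ℂ) : ℂ :=
  ∑ j : ZMod d, (starRingEnd ℂ) (α j) * β j

lemma hω (d : ℕ) [NeZero d] : IsPrimitiveRoot (ω d) d :=
  Complex.isPrimitiveRoot_exp d (NeZero.ne d)

lemma omega_pow_mod (d : ℕ) [NeZero d] (n : ℕ) : ω d ^ n = ω d ^ (n % d) := by
  conv_lhs => rw [← Nat.div_add_mod n d, pow_add, pow_mul, (hω d).pow_eq_one, one_pow, one_mul]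

lemma zmod_sum_val (d : ℕ) [NeZero d] (f : ℕ → ℂ) :
    ∑ n : ZMod d, f n.val = ∑ i ∈ Finset.range d, f i := by
  refine Finset.sum_nbij' (fun n : ZMod d => n.val) (fun i => (i : ZMod d)) ?_ ?_ ?_ ?_ ?_
  · intro a _; exact Finset.mem_range.2 (ZMod.val_lt a)
  · intro a _; exact Finset.mem_univ _
  · intro a _; simp [ZMod.natCast_val, ZMod.cast_id]
  · intro a ha; exact ZMod.val_cast_of_lt (Finset.mem_range.1 ha)
  · intro a _; rfl

lemma sum_omega (d : ℕ) [NeZero d] (m : ZMod d) :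
    ∑ n : ZMod d, ω d ^ (n.val * m.val) = if m = 0 then (d : ℂ) else 0 := by
  have key : ∀ n : ZMod d, ω d ^ (n.val * m.val) = (ω d ^ m.val) ^ n.val := by
    intro n; rw [← pow_mul, mul_comm]
  simp_rw [key]
  rw [zmod_sum_val d (fun i => (ω d ^ m.val) ^ i)]
  by_cases hm : m = 0
  · simp [hm, ZMod.val_zero]
  · have hz : ω d ^ m.val ≠ 1 := by
      apply (hω d).pow_ne_one_of_pos_of_lt
      · exact (fun h => hm (by rwa [← ZMod.val_eq_zero]))
      · exact ZMod.val_lt m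
    rw [geom_sum_eq hz, if_neg hm, ← pow_mul, mul_comm, pow_mul, (hω d).pow_eq_one, one_pow,
      sub_self, zero_div]

lemma omega_pow_congr (d : ℕ) [NeZero d] {a b : ℕ} (h : a % d = b % d) :
    ω d ^ a = ω d ^ b := by
  rw [omega_pow_mod d a, omega_pow_mod d b, h]

/-- For odd `d ≥ 5`: if `⟨α, X Z^i α⟩ = 0` for all `i = 1,…,d-1` and
`⟨α, X² α⟩ = 0`, then also `⟨α, X α⟩ = 0`. -/
theorem stmt_6 (d : ℕ) [NeZero d] (hd : 5 ≤ d) (hodd : Odd d) (α : ZMod d → ℂ)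
    (h1 : ∀ i : ℕ, 1 ≤ i → i ≤ d - 1 → ip d α (pU d 1 (i : ZMod d) α) = 0)
    (h2 : ip d α (pU d 2 0 α) = 0) :
    ip d α (pU d 1 0 α) = 0 := by
  classical
  set c : ZMod d → ℂ := fun j => (starRingEnd ℂ) (α (j + 1)) * α j with hc
  -- rewrite the inner products as Fourier sums
  have hS : ∀ n : ZMod d, ip d α (pU d 1 n α) = ∑ j : ZMod d, ω d ^ (n.val * j.val) * c j := by
    intro n
    rw [ip]
    rw [← Equiv.sum_comp (Equiv.addRight (1 : ZMod d))
      (fun k => (starRingEnd ℂ) (α k) * pU d 1 n α k)]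
    refine Finset.sum_congr rfl fun j _ => ?_
    simp only [Equiv.coe_addRight, pU, add_sub_cancel_right, hc]
    ring
  -- S n = 0 for n ≠ 0
  have hSne : ∀ n : ZMod d, n ≠ 0 → ∑ j : ZMod d, ω d ^ (n.val * j.val) * c j = 0 := by
    intro n hn
    rw [← hS]
    have hval : ((n.val : ℕ) : ZMod d) = n := by simp [ZMod.natCast_val, ZMod.cast_id]
    have h1' := h1 n.val (Nat.one_le_iff_ne_zero.2 (fun h => hn (by rwa [← ZMod.val_eq_zero])))
      (Nat.le_sub_one_of_lt (ZMod.val_lt n))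
    rwa [hval] at h1'
  set S0 : ℂ := ∑ j : ZMod d, ω d ^ ((0 : ZMod d).val * j.val) * c j with hS0
  -- Fourier inversion : d * c a = S0 for all a
  have hconst : ∀ a : ZMod d, (d : ℂ) * c a = S0 := by
    intro a
    have key : ∑ n : ZMod d, ω d ^ (n.val * (-a).val) *
        (∑ j : ZMod d, ω d ^ (n.val * j.val) * c j) = S0 := by
      rw [Finset.sum_eq_single 0]
      · simp [hS0]
      · intro n _ hn; rw [hSne n hn, mul_zero]
      · intro h; exact absurd (Finset.mem_univ 0) h
    rw [← key]
    have swap : ∀ n j : ZMod d,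
        ω d ^ (n.val * (-a).val) * (ω d ^ (n.val * j.val) * c j)
          = ω d ^ (n.val * (j - a).val) * c j := by
      intro n j
      rw [← mul_assoc, ← pow_add]
      congr 1
      apply omega_pow_congr
      have h1 : ((-a) + j).val = ((-a).val + j.val) % d := ZMod.val_add _ _
      have h2 : (-a) + j = j - a := by ring
      have : ((-a).val + j.val) % d = (j - a).val % d := by
        rw [← h2, Nat.mod_eq_of_lt (ZMod.val_lt _), ← h1]
      calc (n.val * (-a).val + n.val * j.val) % d
          = (n.val * ((-a).val + j.val)) % d := by ring_nf
        _ = (n.val * (j - a).val) % d := Nat.ModEq.mul_left n.val this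
    simp_rw [Finset.mul_sum, swap]
    rw [Finset.sum_comm]
    simp_rw [← Finset.sum_mul, sum_omega]
    rw [Finset.sum_eq_single a]
    · simp
    · intro j _ hj
      rw [if_neg (fun h => hj (by rwa [sub_eq_zero] at h)), zero_mul]
    · intro h; exact absurd (Finset.mem_univ a) h
  have hdC : (d : ℂ) ≠ 0 := Nat.cast_ne_zero.2 (NeZero.ne d)
  set lam : ℂ := c 0 with hlam
  have hca : ∀ a : ZMod d, c a = lam :=
    fun a => mul_left_cancel₀ hdC ((hconst a).trans (hconst 0).symm)
  -- rewrite h2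
  have h2' : ∑ j : ZMod d, (starRingEnd ℂ) (α (j + 2)) * α j = 0 := by
    rw [ip, ← Equiv.sum_comp (Equiv.addRight (2 : ZMod d))
      (fun k => (starRingEnd ℂ) (α k) * pU d 2 0 α k)] at h2
    rw [← h2]
    refine Finset.sum_congr rfl fun j _ => ?_
    simp [pU, add_sub_cancel_right, ZMod.val_zero]
  by_cases hzero : lam = 0
  · rw [hS 0, ← hS0, ← hconst 0, ← hlam, hzero, mul_zero]
  · exfalso
    have hαne : ∀ a : ZMod d, α a ≠ 0 := by
      intro a ha
      apply hzero
      rw [← hca a, hc]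
      simp [ha]
    have hterm : ∀ j : ZMod d, (starRingEnd ℂ) (α (j + 2)) * α j
        = lam ^ 2 * (((Complex.normSq (α (j + 1)))⁻¹ : ℝ) : ℂ) := by
      intro j
      have e1 : (starRingEnd ℂ) (α (j + 2)) * α (j + 1) = lam := by
        have h := hca (j + 1)
        simp only [hc] at h
        rwa [show j + 1 + 1 = j + 2 from by rw [add_assoc, one_add_one_eq_two]] at h
      have e2 : (starRingEnd ℂ) (α (j + 1)) * α j = lam := hca j
      have hns : ((Complex.normSq (α (j + 1)) : ℝ) : ℂ) ≠ 0 := by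
        simp [Complex.normSq_eq_zero, hαne (j + 1)]
      have hmul : (starRingEnd ℂ) (α (j + 2)) * α j
          * ((Complex.normSq (α (j + 1)) : ℝ) : ℂ) = lam ^ 2 := by
        rw [← Complex.mul_conj (α (j + 1))]
        calc (starRingEnd ℂ) (α (j + 2)) * α j * (α (j + 1) * (starRingEnd ℂ) (α (j + 1)))
            = ((starRingEnd ℂ) (α (j + 2)) * α (j + 1))
              * ((starRingEnd ℂ) (α (j + 1)) * α j) := by ring
          _ = lam ^ 2 := by rw [e1, e2]; ring
      field_simp at hmul ⊢
      rw [← hmul, Complex.ofReal_div, Complex.ofReal_one, mul_one_div, mul_div_assoc, div_self hns, mul_one]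
    rw [Finset.sum_congr rfl (fun j _ => hterm j), ← Finset.mul_sum] at h2'
    have hsum : ∑ j : ZMod d, (((Complex.normSq (α (j + 1)))⁻¹ : ℝ) : ℂ)
        = ((∑ j : ZMod d, (Complex.normSq (α (j + 1)))⁻¹ : ℝ) : ℂ) := by
      push_cast; rfl
    rw [hsum] at h2'
    rcases mul_eq_zero.1 h2' with h | h
    · exact hzero (pow_eq_zero_iff (by norm_num) |>.1 h)
    · have hpos : 0 < ∑ j : ZMod d, (Complex.normSq (α (j + 1)))⁻¹ := by
        apply Finset.sum_pos
        · intro j _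
          exact inv_pos.2 (Complex.normSq_pos.2 (hαne (j + 1)))
        · exact Finset.univ_nonempty
      rw [Complex.ofReal_eq_zero] at h
      exact hpos.ne' h
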